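/- Let u be an apex of O₂ ∨ X where X is a simple positively weighted graph on n vertices with n ≡ 0 (mod 4). Then with respect to the Laplacian, |U_L(t)_{u,u}| ≥ 2/(n+2) for all t, with equality if and only if t = jπ/2 for an odd integer j. -/

import Mathlib

open Complex Matrix


set_option maxHeartbeats 1000000 in
lemma exp_mulVec_eigen {m : Type*} [Fintype m] [DecidableEq m]
    (A : Matrix m m ℂ) (v : m → ℂ) (μ : ℂ) (h : A *ᵥ v = μ • v) :
    NormedSpace.exp A *ᵥ v = Complex.exp μ • v := by
  letI : SeminormedRing (Matrix m m ℂ) := Matrix.linftyOpSemiNormedRing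
  letI : NormedRing (Matrix m m ℂ) := Matrix.linftyOpNormedRing
  letI : NormedAlgebra ℂ (Matrix m m ℂ) := Matrix.linftyOpNormedAlgebra
  have hpow : ∀ k : ℕ, (A ^ k) *ᵥ v = μ ^ k • v := by
    intro k
    induction k with
    | zero => simp
    | succ k ih =>
        rw [pow_succ, pow_succ, ← Matrix.mulVec_mulVec, h, Matrix.mulVec_smul, ih,
          smul_smul, mul_comm]
  have hs : Summable (fun k : ℕ => ((Nat.factorial k : ℂ))⁻¹ • A ^ k) :=
    NormedSpace.expSeries_summable' (𝕂 := ℂ) A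
  let F : Matrix m m ℂ →ₗ[ℂ] (m → ℂ) :=
    { toFun := fun B => B *ᵥ v
      map_add' := fun B C => Matrix.add_mulVec B C v
      map_smul' := fun c B => Matrix.smul_mulVec c B v }
  have hF : Continuous F := F.continuous_of_finiteDimensional
  have h1 : NormedSpace.exp A *ᵥ v = ∑' k : ℕ, ((Nat.factorial k : ℂ))⁻¹ • (A ^ k *ᵥ v) := by
    have := (hs.hasSum.map F.toAddMonoidHom hF).tsum_eq
    rw [NormedSpace.exp_eq_tsum ℂ]
    simpa [F, Matrix.smul_mulVec] using this.symm
  rw [h1]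
  have h2 : ∀ k : ℕ, ((Nat.factorial k : ℂ))⁻¹ • (A ^ k *ᵥ v) = (((Nat.factorial k : ℂ))⁻¹ * μ ^ k) • v := by
    intro k; rw [hpow k, smul_smul]
  simp_rw [h2]
  have hsm : Summable (fun k : ℕ => ((Nat.factorial k : ℂ))⁻¹ * μ ^ k) := by
    simpa [smul_eq_mul] using NormedSpace.expSeries_summable' (𝕂 := ℂ) μ
  have hexp : Complex.exp μ = ∑' k : ℕ, ((Nat.factorial k : ℂ))⁻¹ * μ ^ k := by
    rw [Complex.exp_eq_exp_ℂ, NormedSpace.exp_eq_tsum ℂ]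
    simp [smul_eq_mul]
  rw [hexp, ← Summable.tsum_smul_const hsm]


lemma cos_sum_id (k : ℕ) (w : ℝ) :
    (k : ℝ) * (k + 1) * (1 - Real.cos w) + k * (1 - Real.cos ((k + 1) * w))
      - (k + 1) * (1 - Real.cos (k * w))
    = ∑ j ∈ Finset.range k,
        2 * ((j : ℝ) + 1) * (1 - Real.cos w) * (1 + Real.cos (((j : ℝ) + 1) * w)) := by
  induction k with
  | zero => simp
  | succ k ih =>
      rw [Finset.sum_range_succ, ← ih]
      push_cast
      have e1 : ((k : ℝ) + 1 + 1) * w = ((k : ℝ) + 1) * w + w := by ring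
      have e2 : (k : ℝ) * w = ((k : ℝ) + 1) * w - w := by ring
      rw [e1, e2, Real.cos_add, Real.cos_sub]
      ring

lemma cos_sum_bound (k : ℕ) (hk : 2 ≤ k) (w : ℝ)
    (b : ℝ)
    (hb : b = (k : ℝ) * (k + 1) * (1 - Real.cos w) + k * (1 - Real.cos ((k + 1) * w))
      - (k + 1) * (1 - Real.cos (k * w))) :
    0 ≤ b ∧ (b = 0 ↔ Real.cos w = 1) := by
  rw [hb, cos_sum_id]
  have hterm : ∀ j ∈ Finset.range k,
      0 ≤ 2 * ((j : ℝ) + 1) * (1 - Real.cos w) * (1 + Real.cos (((j : ℝ) + 1) * w)) := by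
    intro j _
    have h1 := Real.cos_le_one w
    have h2 := Real.neg_one_le_cos (((j : ℝ) + 1) * w)
    apply mul_nonneg (mul_nonneg (by positivity) (by linarith)) (by linarith)
  refine ⟨Finset.sum_nonneg hterm, ?_, ?_⟩
  · intro h0
    have hz := (Finset.sum_eq_zero_iff_of_nonneg hterm).mp h0
    have h1 : 2 * ((0 : ℝ) + 1) * (1 - Real.cos w) * (1 + Real.cos (((0 : ℝ) + 1) * w)) = 0 := by
      have := hz 0 (Finset.mem_range.mpr (by omega))
      simpa using this
    have h2 : 2 * ((1 : ℝ) + 1) * (1 - Real.cos w) * (1 + Real.cos (((1 : ℝ) + 1) * w)) = 0 := by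
      have := hz 1 (Finset.mem_range.mpr (by omega))
      push_cast at this ⊢
      convert this using 3
    have hc2 : Real.cos (((1 : ℝ) + 1) * w) = 2 * Real.cos w ^ 2 - 1 := by
      rw [show ((1 : ℝ) + 1) * w = 2 * w by ring, Real.cos_two_mul]
    by_contra hne
    have hlt : Real.cos w < 1 := lt_of_le_of_ne (Real.cos_le_one w) hne
    rcases mul_eq_zero.mp h1 with h | h
    · rcases mul_eq_zero.mp h with h' | h'
      · norm_num at h'
      · -- 1 - cos w = 0 contradicts hlt
        have : Real.cos w = 1 := by linarith
        exact hne this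
    · -- 1 + cos (1*w) = 0, i.e. cos w = -1
      have hcw : Real.cos w = -1 := by
        have : Real.cos (((0:ℝ)+1) * w) = Real.cos w := by norm_num
        rw [this] at h; linarith
      rw [hc2, hcw] at h2
      norm_num at h2
  · intro h1
    apply Finset.sum_eq_zero
    intro j _
    rw [h1]
    ring

lemma entry_formula (n : ℕ) (W : Matrix (Fin n) (Fin n) ℝ)
    (Adj : Matrix (Fin 2 ⊕ Fin n) (Fin 2 ⊕ Fin n) ℝ)
    (hAdj : Adj = Matrix.fromBlocks 0
      (Matrix.of fun _ _ => 1) (Matrix.of fun _ _ => 1) W)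
    (L : Matrix (Fin 2 ⊕ Fin n) (Fin 2 ⊕ Fin n) ℂ)
    (hL : L = (Matrix.diagonal (fun x => ∑ y, Adj x y) - Adj).map Complex.ofReal)
    (i : Fin 2) (t : ℝ) :
    (NormedSpace.exp ((Complex.I * t) • L)) (Sum.inl i) (Sum.inl i)
      = 1 / ((n : ℂ) + 2) + Complex.exp (Complex.I * t * n) / 2
        + (n : ℂ) * Complex.exp (Complex.I * t * (n + 2)) / (2 * ((n : ℂ) + 2)) := by
  have hn2 : ((n : ℂ) + 2) ≠ 0 := by
    have h : ((n + 2 : ℕ) : ℂ) ≠ 0 := Nat.cast_ne_zero.mpr (by omega)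
    push_cast at h
    exact h
  -- entries of L
  have hL11 : ∀ j j' : Fin 2, L (Sum.inl j) (Sum.inl j') = if j = j' then (n : ℂ) else 0 := by
    intro j j'
    subst hAdj hL
    by_cases h : j = j' <;>
      simp [h, Matrix.map_apply, Matrix.diagonal, Fintype.sum_sum_type, Matrix.fromBlocks,
        Finset.sum_const, Finset.card_univ]
  have hL12 : ∀ (j : Fin 2) (y : Fin n), L (Sum.inl j) (Sum.inr y) = -1 := by
    intro j y
    subst hAdj hL
    simp [Matrix.map_apply, Matrix.diagonal, Matrix.fromBlocks]
  have hL21 : ∀ (y : Fin n) (j : Fin 2), L (Sum.inr y) (Sum.inl j) = -1 := by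
    intro y j
    subst hAdj hL
    simp [Matrix.map_apply, Matrix.diagonal, Matrix.fromBlocks]
  have hL22 : ∀ y y' : Fin n, L (Sum.inr y) (Sum.inr y')
      = (if y = y' then (2 + ∑ z, (W y z : ℂ)) else 0) - (W y y' : ℂ) := by
    intro y y'
    subst hAdj hL
    by_cases h : y = y' <;>
      simp [h, Matrix.map_apply, Matrix.diagonal, Fintype.sum_sum_type, Matrix.fromBlocks,
        Finset.sum_const, Finset.card_univ] <;> norm_num
  -- eigenvectors
  set v0 : Fin 2 ⊕ Fin n → ℂ := fun _ => 1 with hv0def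
  set v1 : Fin 2 ⊕ Fin n → ℂ := Sum.elim (fun j => if j = i then 1 else -1) 0 with hv1def
  set v2 : Fin 2 ⊕ Fin n → ℂ := Sum.elim (fun _ => (n : ℂ)) (fun _ => -2) with hv2def
  have hv0 : L *ᵥ v0 = (0 : ℂ) • v0 := by
    funext x
    cases x with
    | inl j =>
        simp [Matrix.mulVec, dotProduct, Fintype.sum_sum_type, hL11, hL12, hv0def,
          Finset.sum_const, Finset.card_univ]
    | inr y =>
        simp [Matrix.mulVec, dotProduct, Fintype.sum_sum_type, hL21, hL22, hv0def,
          Finset.sum_const, Finset.card_univ, Finset.sum_sub_distrib, Fin.sum_univ_two]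
  have hfin2 : ∑ j : Fin 2, (if j = i then (1:ℂ) else -1) = 0 := by
    fin_cases i <;> simp [Fin.sum_univ_two]
  have hv1 : L *ᵥ v1 = (n : ℂ) • v1 := by
    funext x
    cases x with
    | inl j =>
        simp [Matrix.mulVec, dotProduct, Fintype.sum_sum_type, hL11, hL12, hv1def,
          Finset.sum_ite_eq, Finset.sum_const, Finset.card_univ]
        fin_cases j <;> fin_cases i <;> norm_num
    | inr y =>
        simp [Matrix.mulVec, dotProduct, Fintype.sum_sum_type, hL21, hL22, hv1def,
          Finset.sum_const, Finset.card_univ, Fin.sum_univ_two]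
        fin_cases i <;> norm_num
  have hv2 : L *ᵥ v2 = ((n : ℂ) + 2) • v2 := by
    funext x
    cases x with
    | inl j =>
        simp [Matrix.mulVec, dotProduct, Fintype.sum_sum_type, hL11, hL12, hv2def,
          Finset.sum_ite_eq, Finset.sum_const, Finset.card_univ]
        ring
    | inr y =>
        simp [Matrix.mulVec, dotProduct, Fintype.sum_sum_type, hL21, hL22, hv2def,
          Finset.sum_const, Finset.card_univ, Finset.sum_sub_distrib, Fin.sum_univ_two,
          sub_mul, ite_mul]
        rw [add_mul, Finset.sum_mul]
        ring
  -- decomposition of the basis vector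
  have hdec : (Pi.single (Sum.inl i) 1 : Fin 2 ⊕ Fin n → ℂ)
      = (1 / ((n : ℂ) + 2)) • v0 + (1 / 2 : ℂ) • v1 + (1 / (2 * ((n : ℂ) + 2))) • v2 := by
    funext x
    cases x with
    | inl j =>
        by_cases h : j = i
        · subst h
          simp [Pi.single_apply, hv0def, hv1def, hv2def]
          field_simp
          ring
        · simp [Pi.single_apply, h, hv0def, hv1def, hv2def]
          field_simp
          ring
    | inr y =>
        simp [Pi.single_apply, hv0def, hv1def, hv2def]
  have hA0 : ((Complex.I * t) • L) *ᵥ v0 = (Complex.I * t * 0) • v0 := by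
    rw [Matrix.smul_mulVec, hv0, smul_smul]
  have hA1 : ((Complex.I * t) • L) *ᵥ v1 = (Complex.I * t * n) • v1 := by
    rw [Matrix.smul_mulVec, hv1, smul_smul]
  have hA2 : ((Complex.I * t) • L) *ᵥ v2 = (Complex.I * t * (n + 2)) • v2 := by
    rw [Matrix.smul_mulVec, hv2, smul_smul]
  have hmain : NormedSpace.exp ((Complex.I * t) • L) *ᵥ (Pi.single (Sum.inl i) 1)
      = (1 / ((n : ℂ) + 2)) • (Complex.exp (Complex.I * t * 0) • v0)
        + (1 / 2 : ℂ) • (Complex.exp (Complex.I * t * n) • v1)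
        + (1 / (2 * ((n : ℂ) + 2))) • (Complex.exp (Complex.I * t * (n + 2)) • v2) := by
    rw [hdec, Matrix.mulVec_add, Matrix.mulVec_add, Matrix.mulVec_smul, Matrix.mulVec_smul,
      Matrix.mulVec_smul, exp_mulVec_eigen _ _ _ hA0, exp_mulVec_eigen _ _ _ hA1,
      exp_mulVec_eigen _ _ _ hA2]
  have hev := congrFun hmain (Sum.inl i)
  simp [hv0def, hv1def, hv2def, mul_zero, Complex.exp_zero] at hev
  rw [hev]
  field_simp


set_option maxHeartbeats 1000000 in
/-- Let `u` be an apex of `O₂ ∨ X` where `X` is simple positively weighted on `n`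
vertices with `n ≡ 0 (mod 4)`. Then `|U_L(t)_{u,u}| ≥ 2/(n+2)` for all `t`, with
equality iff `t = jπ/2` for an odd integer `j`. -/
theorem stmt_13 (n : ℕ) (hn : 1 ≤ n) (hn4 : n % 4 = 0)
    (W : Matrix (Fin n) (Fin n) ℝ) (hWs : W.IsSymm)
    (hW0 : ∀ i, W i i = 0) (hWpos : ∀ i j, 0 ≤ W i j)
    (Adj : Matrix (Fin 2 ⊕ Fin n) (Fin 2 ⊕ Fin n) ℝ)
    (hAdj : Adj = Matrix.fromBlocks 0
      (Matrix.of fun _ _ => 1) (Matrix.of fun _ _ => 1) W)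
    (L : Matrix (Fin 2 ⊕ Fin n) (Fin 2 ⊕ Fin n) ℂ)
    (hL : L = (Matrix.diagonal (fun x => ∑ y, Adj x y) - Adj).map Complex.ofReal)
    (i : Fin 2) (t : ℝ) :
    2 / ((n : ℝ) + 2) ≤
      ‖(NormedSpace.exp ((Complex.I * t) • L)) (Sum.inl i) (Sum.inl i)‖ ∧
    (‖(NormedSpace.exp ((Complex.I * t) • L)) (Sum.inl i) (Sum.inl i)‖ =
        2 / ((n : ℝ) + 2) ↔ ∃ j : ℤ, Odd j ∧ t = j * Real.pi / 2) := by
  obtain ⟨m, hm⟩ : ∃ m, n = 4 * m := ⟨4 / 4 * (n / 4), by omega⟩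
  have hm1 : 1 ≤ m := by omega
  have hν0 : (0 : ℝ) ≤ (n : ℝ) := Nat.cast_nonneg n
  have hν2 : (0 : ℝ) < (n : ℝ) + 2 := by linarith
  have hν2' : (n : ℝ) + 2 ≠ 0 := ne_of_gt hν2
  set E : ℂ := (NormedSpace.exp ((Complex.I * t) • L)) (Sum.inl i) (Sum.inl i) with hEdef
  have hE := entry_formula n W Adj hAdj L hL i t
  have harg1 : Complex.I * (t : ℂ) * (n : ℂ) = ((t * (n : ℝ) : ℝ) : ℂ) * Complex.I := by
    push_cast; ring
  have harg2 : Complex.I * (t : ℂ) * ((n : ℂ) + 2)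
      = ((t * ((n : ℝ) + 2) : ℝ) : ℂ) * Complex.I := by
    push_cast; ring
  have hE' : E = ((1 / ((n : ℝ) + 2) + Real.cos (t * (n : ℝ)) / 2
        + (n : ℝ) * Real.cos (t * ((n : ℝ) + 2)) / (2 * ((n : ℝ) + 2)) : ℝ) : ℂ)
      + ((Real.sin (t * (n : ℝ)) / 2
        + (n : ℝ) * Real.sin (t * ((n : ℝ) + 2)) / (2 * ((n : ℝ) + 2)) : ℝ) : ℂ)
        * Complex.I := by
    rw [hEdef, hE, harg1, harg2, Complex.exp_mul_I, Complex.exp_mul_I]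
    simp only [← Complex.ofReal_cos, ← Complex.ofReal_sin]
    push_cast
    ring
  have hsq : (‖E‖) ^ 2
      = (1 / ((n : ℝ) + 2) + Real.cos (t * (n : ℝ)) / 2
        + (n : ℝ) * Real.cos (t * ((n : ℝ) + 2)) / (2 * ((n : ℝ) + 2))) ^ 2
      + (Real.sin (t * (n : ℝ)) / 2
        + (n : ℝ) * Real.sin (t * ((n : ℝ) + 2)) / (2 * ((n : ℝ) + 2))) ^ 2 := by
    rw [hE', Complex.norm_add_mul_I, Real.sq_sqrt (by positivity)]
  set w : ℝ := 2 * t - Real.pi with hw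
  set k : ℕ := 2 * m with hk
  set b : ℝ := (k : ℝ) * (k + 1) * (1 - Real.cos w) + k * (1 - Real.cos ((k + 1) * w))
      - (k + 1) * (1 - Real.cos (k * w)) with hbdef
  obtain ⟨hb0, hbiff⟩ := cos_sum_bound k (by omega) w b hbdef
  have hcw : Real.cos w = -Real.cos (2 * t) := by rw [hw, Real.cos_sub_pi]
  have hckw : Real.cos ((k : ℝ) * w) = Real.cos (t * (n : ℝ)) := by
    have h : (k : ℝ) * w = t * (n : ℝ) - (m : ℤ) * (2 * Real.pi) := by
      rw [hw, hk, hm]; push_cast; ring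
    rw [h, Real.cos_sub_int_mul_two_pi]
  have hck1w : Real.cos (((k : ℝ) + 1) * w) = -Real.cos (t * ((n : ℝ) + 2)) := by
    have h : ((k : ℝ) + 1) * w = (t * ((n : ℝ) + 2) - Real.pi) - (m : ℤ) * (2 * Real.pi) := by
      rw [hw, hk, hm]; push_cast; ring
    rw [h, Real.cos_sub_int_mul_two_pi, Real.cos_sub_pi]
  have hkν : (k : ℝ) * 2 = (n : ℝ) := by rw [hk, hm]; push_cast; ring
  have hpy1 : Real.sin (t * (n : ℝ)) ^ 2 + Real.cos (t * (n : ℝ)) ^ 2 = 1 :=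
    Real.sin_sq_add_cos_sq _
  have hpy2 : Real.sin (t * ((n : ℝ) + 2)) ^ 2 + Real.cos (t * ((n : ℝ) + 2)) ^ 2 = 1 :=
    Real.sin_sq_add_cos_sq _
  have hcross : Real.cos (t * ((n : ℝ) + 2)) * Real.cos (t * (n : ℝ))
      + Real.sin (t * ((n : ℝ) + 2)) * Real.sin (t * (n : ℝ)) = Real.cos (2 * t) := by
    rw [← Real.cos_sub]
    congr 1
    ring
  have hbsub : b = ((n : ℝ)/2) * ((n : ℝ)/2 + 1) * (1 + Real.cos (2*t))
      + ((n : ℝ)/2) * (1 + Real.cos (t * ((n : ℝ) + 2)))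
      - ((n : ℝ)/2 + 1) * (1 - Real.cos (t * (n : ℝ))) := by
    have hK : (k : ℝ) = (n : ℝ) / 2 := by linarith [hkν]
    rw [hbdef, hcw, hckw, hck1w, hK]
    ring
  have hRe : (1 / ((n : ℝ) + 2) + Real.cos (t * (n : ℝ)) / 2
        + (n : ℝ) * Real.cos (t * ((n : ℝ) + 2)) / (2 * ((n : ℝ) + 2))) * (2 * ((n : ℝ) + 2))
      = 2 + ((n : ℝ) + 2) * Real.cos (t * (n : ℝ))
        + (n : ℝ) * Real.cos (t * ((n : ℝ) + 2)) := by
    field_simp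
  have hIm : (Real.sin (t * (n : ℝ)) / 2
        + (n : ℝ) * Real.sin (t * ((n : ℝ) + 2)) / (2 * ((n : ℝ) + 2))) * (2 * ((n : ℝ) + 2))
      = ((n : ℝ) + 2) * Real.sin (t * (n : ℝ))
        + (n : ℝ) * Real.sin (t * ((n : ℝ) + 2)) := by
    field_simp
  have hkey : (‖E‖) ^ 2 * (2 * ((n : ℝ) + 2)) ^ 2 = 4 * (4 + 2 * b) := by
    rw [hsq, hbsub]
    linear_combination
      ((1 / ((n : ℝ) + 2) + Real.cos (t * (n : ℝ)) / 2
        + (n : ℝ) * Real.cos (t * ((n : ℝ) + 2)) / (2 * ((n : ℝ) + 2))) * (2 * ((n : ℝ) + 2))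
        + (2 + ((n : ℝ) + 2) * Real.cos (t * (n : ℝ))
          + (n : ℝ) * Real.cos (t * ((n : ℝ) + 2)))) * hRe
      + ((Real.sin (t * (n : ℝ)) / 2
        + (n : ℝ) * Real.sin (t * ((n : ℝ) + 2)) / (2 * ((n : ℝ) + 2))) * (2 * ((n : ℝ) + 2))
        + (((n : ℝ) + 2) * Real.sin (t * (n : ℝ))
          + (n : ℝ) * Real.sin (t * ((n : ℝ) + 2)))) * hIm
      + ((n : ℝ) + 2) ^ 2 * hpy1 + (n : ℝ) ^ 2 * hpy2
      + 2 * (n : ℝ) * ((n : ℝ) + 2) * hcross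
  have habs0 : 0 ≤ ‖E‖ := norm_nonneg E
  have hu : (‖E‖ * ((n : ℝ) + 2)) ^ 2 = 4 + 2 * b := by
    linear_combination hkey / 4
  have hu0 : 0 ≤ ‖E‖ * ((n : ℝ) + 2) := mul_nonneg habs0 (le_of_lt hν2)
  constructor
  · rw [div_le_iff₀ hν2]
    nlinarith [hu, hb0, hu0]
  · constructor
    · intro heq
      have hb00 : b = 0 := by
        have h2 : ‖E‖ * ((n : ℝ) + 2) = 2 := by
          rw [heq]; field_simp
        rw [h2] at hu
        linarith
      have hcw1 : Real.cos w = 1 := hbiff.mp hb00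
      have hc2t : Real.cos (2 * t) = -1 := by
        rw [hcw] at hcw1; linarith
      have hct : Real.cos t = 0 := by
        have h := Real.cos_two_mul t
        rw [hc2t] at h
        nlinarith [h]
      obtain ⟨j, hj⟩ := Real.cos_eq_zero_iff.mp hct
      exact ⟨2 * j + 1, ⟨j, by ring⟩, by rw [hj]; push_cast; ring⟩
    · rintro ⟨j, ⟨l, hl⟩, ht⟩
      have hct : Real.cos t = 0 := by
        apply Real.cos_eq_zero_iff.mpr
        exact ⟨l, by rw [ht, hl]; push_cast; ring⟩
      have hcw1 : Real.cos w = 1 := by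
        rw [hcw, Real.cos_two_mul, hct]
        norm_num
      have hb00 : b = 0 := hbiff.mpr hcw1
      rw [hb00] at hu
      have hfac : (‖E‖ * ((n : ℝ) + 2) - 2) * (‖E‖ * ((n : ℝ) + 2) + 2)
          = 0 := by linear_combination hu
      rcases mul_eq_zero.mp hfac with h | h
      · have : ‖E‖ * ((n : ℝ) + 2) = 2 := by linarith
        field_simp
        linarith [this]
      · exfalso
        nlinarith [hu0]
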